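/- Let 𝒳 and 𝒜 be finite nonempty sets, let n, h ≥ 1 be integers, and let (x_{t,i}, a_{t,i}) ∈ 𝒳×𝒜 for t = 1,…,n and i = 1,…,h be an arbitrary doubly indexed sequence of state-action pairs. For each pair (x,a) let N_t(x,a) = Σ_{ℓ=1}^{t−1} Σ_{i=1}^{h} 1{x_{ℓ,i} = x, a_{ℓ,i} = a}. Let Λ > 0 and suppose Λ_R(x,a) ≥ Λ and Λ_T(x,a) ≥ Λ for all (x,a). Define β_t(x,a) = √( 2 log(2|𝒳||𝒜|n) / (Λ_R(x,a) + N_t(x,a) + 1) ) + √( 4|𝒳| log(4|𝒳||𝒜|n) / (Λ_T(x,a) + N_t(x,a) + 1) ). Then h · Σ_{t=1}^{n} Σ_{i=1}^{h} min{1, β_t(x_{t,i}, a_{t,i})} ≤ 4|𝒳| h √( 2|𝒜| n h · log(4|𝒳||𝒜|n) · log(1 + n h / (2|𝒳||𝒜|Λ)) ) + 2|𝒳||𝒜| h². -/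

import Mathlib

open Finset

/-- Let `𝒳, 𝒜` be finite nonempty sets, `n, h ≥ 1`, and `(x_{t,i}, a_{t,i})` an arbitrary
doubly indexed sequence of state-action pairs with visit counts
`N_t(x,a) = Σ_{ℓ=1}^{t−1} Σ_{i=1}^{h} 1{x_{ℓ,i}=x, a_{ℓ,i}=a}`. Let `Λ > 0` with
`Λ_R(x,a) ≥ Λ` and `Λ_T(x,a) ≥ Λ` for all `(x,a)`, and set
`β_t(x,a) = √(2 log(2|𝒳||𝒜|n)/(Λ_R(x,a)+N_t(x,a)+1))
  + √(4|𝒳| log(4|𝒳||𝒜|n)/(Λ_T(x,a)+N_t(x,a)+1))`. Then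
`h Σ_{t=1}^n Σ_{i=1}^h min{1, β_t(x_{t,i},a_{t,i})}
  ≤ 4|𝒳| h √(2|𝒜| n h log(4|𝒳||𝒜|n) log(1 + n h/(2|𝒳||𝒜|Λ))) + 2|𝒳||𝒜| h²`. -/


lemma aux_min_add (a b : ℝ) (ha : 0 ≤ a) (hb : 0 ≤ b) :
    min 1 (a + b) ≤ min 1 a + min 1 b := by
  rcases le_total 1 a with h | h
  · calc min 1 (a+b) ≤ 1 := min_le_left _ _
    _ ≤ min 1 a + min 1 b := by
        rw [min_eq_left h]; have : (0:ℝ) ≤ min 1 b := le_min zero_le_one hb; linarith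
  rcases le_total 1 b with h' | h'
  · calc min 1 (a+b) ≤ 1 := min_le_left _ _
    _ ≤ min 1 a + min 1 b := by
        rw [min_eq_left h']; have : (0:ℝ) ≤ min 1 a := le_min zero_le_one ha; linarith
  · rw [min_eq_right h, min_eq_right h']; exact min_le_right _ _

lemma aux_harmonic (Λ : ℝ) (hΛ : 0 < Λ) (K : ℕ) :
    ∑ m ∈ range K, 1 / (Λ + m + 1) ≤ Real.log (Λ + K) - Real.log Λ := by
  induction K with
  | zero => simp
  | succ K ih =>
    rw [Finset.sum_range_succ]
    have h1 : (0:ℝ) < Λ + K := by positivity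
    have h2 : (0:ℝ) < Λ + K + 1 := by positivity
    have key : 1 / (Λ + K + 1) ≤ Real.log (Λ + K + 1) - Real.log (Λ + K) := by
      have hlog := Real.log_le_sub_one_of_pos (show (0:ℝ) < (Λ + K) / (Λ + K + 1) by positivity)
      rw [Real.log_div (ne_of_gt h1) (ne_of_gt h2)] at hlog
      have heq : (Λ + K) / (Λ + K + 1) - 1 = -(1 / (Λ + K + 1)) := by field_simp; ring
      rw [heq] at hlog; linarith
    push_cast
    have h3 : Λ + ((K:ℝ) + 1) = Λ + K + 1 := by ring
    rw [h3]
    linarith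

lemma aux_sqrtsum (Λ : ℝ) (hΛ : 0 < Λ) (K : ℕ) :
    ∑ m ∈ range K, 1 / Real.sqrt (Λ + m + 1)
      ≤ Real.sqrt (K * (Real.log (Λ + K) - Real.log Λ)) := by
  have hterm : ∀ m : ℕ, 1 / Real.sqrt (Λ + m + 1)
      = Real.sqrt 1 * Real.sqrt (1 / (Λ + m + 1)) := by
    intro m
    rw [Real.sqrt_one, one_mul, one_div, one_div, ← Real.sqrt_inv]
  calc ∑ m ∈ range K, 1 / Real.sqrt (Λ + m + 1)
      = ∑ m ∈ range K, Real.sqrt 1 * Real.sqrt (1 / (Λ + m + 1)) := by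
        exact Finset.sum_congr rfl fun m _ => hterm m
    _ ≤ Real.sqrt (∑ _m ∈ range K, (1:ℝ)) * Real.sqrt (∑ m ∈ range K, 1 / (Λ + m + 1)) :=
        Real.sum_sqrt_mul_sqrt_le _ (fun _ => zero_le_one)
          (fun m => by positivity)
    _ ≤ Real.sqrt K * Real.sqrt (Real.log (Λ + K) - Real.log Λ) := by
        apply mul_le_mul
        · simp
        · exact Real.sqrt_le_sqrt (aux_harmonic Λ hΛ K)
        · positivity
        · positivity
    _ = Real.sqrt (K * (Real.log (Λ + K) - Real.log Λ)) :=
        (Real.sqrt_mul (Nat.cast_nonneg K) _).symm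

lemma aux_tele (F : ℕ → ℝ) (f : ℕ → ℕ) (hf0 : f 1 = 0)
    (hmono : ∀ t, 1 ≤ t → f t ≤ f (t + 1)) (n : ℕ) :
    ∑ t ∈ Icc 1 n, ∑ m ∈ Finset.Ico (f t) (f (t + 1)), F m
      = ∑ m ∈ range (f (n + 1)), F m := by
  induction n with
  | zero => simp [hf0]
  | succ n ih =>
    rw [Finset.sum_Icc_succ_top (by omega : 1 ≤ n + 1), ih,
      ← Nat.Ico_zero_eq_range]
    rw [Finset.range_eq_Ico]
    exact Finset.sum_Ico_consecutive F (Nat.zero_le _) (hmono (n + 1) (by omega))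

lemma aux_Fsum (Λ c : ℝ) (hΛ : 0 < Λ) (hc : 0 ≤ c) (h K : ℕ) :
    ∑ m ∈ range K, (if m < h then (1:ℝ) else c / Real.sqrt (Λ + (m - h : ℕ) + 1))
      ≤ h + c * Real.sqrt (K * (Real.log (Λ + K) - Real.log Λ)) := by
  have hsq : 0 ≤ c * Real.sqrt (K * (Real.log (Λ + K) - Real.log Λ)) := by positivity
  rcases le_or_gt K h with hK | hK
  · have : ∑ m ∈ range K, (if m < h then (1:ℝ) else c / Real.sqrt (Λ + (m - h : ℕ) + 1))
        = ∑ _m ∈ range K, (1:ℝ) := by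
      refine Finset.sum_congr rfl fun m hm => ?_
      rw [if_pos (lt_of_lt_of_le (Finset.mem_range.mp hm) hK)]
    rw [this]
    simp only [Finset.sum_const, Finset.card_range, nsmul_eq_mul, mul_one]
    have : (K:ℝ) ≤ h := Nat.cast_le.mpr hK
    linarith
  · rw [← Nat.Ico_zero_eq_range,
      ← Finset.sum_Ico_consecutive _ (Nat.zero_le h) (le_of_lt hK)]
    have e1 : ∑ m ∈ Finset.Ico 0 h, (if m < h then (1:ℝ) else c / Real.sqrt (Λ + (m - h : ℕ) + 1))
        = h := by
      rw [Finset.sum_congr rfl fun m hm => if_pos (Finset.mem_Ico.mp hm).2]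
      simp
    have e2 : ∑ m ∈ Finset.Ico h K, (if m < h then (1:ℝ) else c / Real.sqrt (Λ + (m - h : ℕ) + 1))
        = ∑ m ∈ Finset.Ico h K, c / Real.sqrt (Λ + (m - h : ℕ) + 1) :=
      Finset.sum_congr rfl fun m hm => if_neg (by
        have := (Finset.mem_Ico.mp hm).1; omega)
    rw [e1, e2]
    have e3 : ∑ m ∈ Finset.Ico h K, c / Real.sqrt (Λ + (m - h : ℕ) + 1)
        = ∑ m ∈ range (K - h), c / Real.sqrt (Λ + m + 1) := by
      rw [Finset.sum_Ico_eq_sum_range]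
      refine Finset.sum_congr rfl fun m _ => ?_
      have : h + m - h = m := by omega
      rw [this]
    rw [e3]
    have e4 : ∑ m ∈ range (K - h), c / Real.sqrt (Λ + m + 1)
        ≤ ∑ m ∈ range K, c / Real.sqrt (Λ + m + 1) := by
      apply Finset.sum_le_sum_of_subset_of_nonneg
      · exact Finset.range_subset_range.mpr (Nat.sub_le K h)
      · intro m _ _; positivity
    have e5 : ∑ m ∈ range K, c / Real.sqrt (Λ + m + 1)
        ≤ c * Real.sqrt (K * (Real.log (Λ + K) - Real.log Λ)) := by
      have : ∑ m ∈ range K, c / Real.sqrt (Λ + m + 1)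
          = c * ∑ m ∈ range K, 1 / Real.sqrt (Λ + m + 1) := by
        rw [Finset.mul_sum]; exact Finset.sum_congr rfl fun m _ => by ring
      rw [this]
      exact mul_le_mul_of_nonneg_left (aux_sqrtsum Λ hΛ K) hc
    linarith

lemma aux_perpair (Λ c : ℝ) (hΛ : 0 < Λ) (hc : 0 ≤ c) (n h : ℕ)
    (f : ℕ → ℕ) (cnt : ℕ → ℕ) (hf0 : f 1 = 0)
    (hstep : ∀ t, 1 ≤ t → f (t + 1) = f t + cnt t)
    (hcnt : ∀ t, cnt t ≤ h) :
    ∑ t ∈ Icc 1 n, (cnt t : ℝ) * min 1 (c / Real.sqrt (Λ + f t + 1))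
      ≤ h + c * Real.sqrt ((f (n + 1)) * (Real.log (Λ + f (n + 1)) - Real.log Λ)) := by
  set F : ℕ → ℝ := fun m => if m < h then (1:ℝ) else c / Real.sqrt (Λ + (m - h : ℕ) + 1) with hF
  have hmono : ∀ t, 1 ≤ t → f t ≤ f (t + 1) := fun t ht => by rw [hstep t ht]; omega
  have step1 : ∀ t ∈ Icc 1 n, (cnt t : ℝ) * min 1 (c / Real.sqrt (Λ + f t + 1))
      ≤ ∑ m ∈ Finset.Ico (f t) (f (t + 1)), F m := by
    intro t ht
    have ht1 : 1 ≤ t := (Finset.mem_Icc.mp ht).1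
    have hcard : f (t + 1) - f t = cnt t := by rw [hstep t ht1]; omega
    have : (cnt t : ℝ) * min 1 (c / Real.sqrt (Λ + f t + 1))
        = ∑ _m ∈ Finset.Ico (f t) (f (t + 1)), min 1 (c / Real.sqrt (Λ + f t + 1)) := by
      rw [Finset.sum_const, Nat.card_Ico, hcard, nsmul_eq_mul]
    rw [this]
    refine Finset.sum_le_sum fun m hm => ?_
    obtain ⟨hm1, hm2⟩ := Finset.mem_Ico.mp hm
    by_cases hmh : m < h
    · rw [hF]; simp only [if_pos hmh]; exact min_le_left _ _
    · rw [hF]; simp only [if_neg hmh]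
      refine le_trans (min_le_right _ _) ?_
      have hmle : (m - h : ℕ) ≤ f t := by
        have := hstep t ht1; have := hcnt t; omega
      have h1 : (0:ℝ) < Real.sqrt (Λ + (m - h : ℕ) + 1) := by positivity
      apply div_le_div_of_nonneg_left hc h1
      apply Real.sqrt_le_sqrt
      have : ((m - h : ℕ) : ℝ) ≤ f t := Nat.cast_le.mpr hmle
      linarith
  calc ∑ t ∈ Icc 1 n, (cnt t : ℝ) * min 1 (c / Real.sqrt (Λ + f t + 1))
      ≤ ∑ t ∈ Icc 1 n, ∑ m ∈ Finset.Ico (f t) (f (t + 1)), F m := Finset.sum_le_sum step1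
    _ = ∑ m ∈ range (f (n + 1)), F m := aux_tele F f hf0 hmono n
    _ ≤ h + c * Real.sqrt ((f (n + 1)) * (Real.log (Λ + f (n + 1)) - Real.log Λ)) :=
        aux_Fsum Λ c hΛ hc h (f (n + 1))

set_option maxHeartbeats 1000000 in
theorem sum_confidence_widths_le {𝒳 𝒜 : Type*} [Fintype 𝒳] [Fintype 𝒜]
    [DecidableEq 𝒳] [DecidableEq 𝒜] [Nonempty 𝒳] [Nonempty 𝒜]
    {n h : ℕ} (hn : 1 ≤ n) (hh : 1 ≤ h)
    (x : ℕ → ℕ → 𝒳) (a : ℕ → ℕ → 𝒜)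
    (N : ℕ → 𝒳 → 𝒜 → ℕ)
    (hN : ∀ t p q, N t p q =
      ∑ l ∈ Finset.Ico 1 t, ∑ i ∈ Finset.Icc 1 h,
        if x l i = p ∧ a l i = q then 1 else 0)
    (Λ : ℝ) (hΛ : 0 < Λ)
    (ΛR ΛT : 𝒳 → 𝒜 → ℝ) (hΛR : ∀ p q, Λ ≤ ΛR p q) (hΛT : ∀ p q, Λ ≤ ΛT p q)
    (β : ℕ → 𝒳 → 𝒜 → ℝ)
    (hβ : ∀ t p q, β t p q =
      Real.sqrt (2 * Real.log (2 * Fintype.card 𝒳 * Fintype.card 𝒜 * n) /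
          (ΛR p q + N t p q + 1)) +
        Real.sqrt (4 * Fintype.card 𝒳 *
            Real.log (4 * Fintype.card 𝒳 * Fintype.card 𝒜 * n) /
          (ΛT p q + N t p q + 1))) :
    (h : ℝ) * ∑ t ∈ Finset.Icc 1 n, ∑ i ∈ Finset.Icc 1 h,
        min 1 (β t (x t i) (a t i)) ≤
      4 * Fintype.card 𝒳 * h *
          Real.sqrt (2 * Fintype.card 𝒜 * n * h *
            Real.log (4 * Fintype.card 𝒳 * Fintype.card 𝒜 * n) *
            Real.log (1 + n * h / (2 * Fintype.card 𝒳 * Fintype.card 𝒜 * Λ))) +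
        2 * Fintype.card 𝒳 * Fintype.card 𝒜 * h ^ 2 := by
  classical
  set X : ℝ := (Fintype.card 𝒳 : ℝ) with hXdef
  set A : ℝ := (Fintype.card 𝒜 : ℝ) with hAdef
  have hX1 : (1:ℝ) ≤ X := by
    rw [hXdef]; exact_mod_cast Fintype.card_pos
  have hA1 : (1:ℝ) ≤ A := by
    rw [hAdef]; exact_mod_cast Fintype.card_pos
  have hn1 : (1:ℝ) ≤ (n:ℝ) := by exact_mod_cast hn
  have hh1 : (1:ℝ) ≤ (h:ℝ) := by exact_mod_cast hh
  have hXA : (1:ℝ) ≤ X * A := by nlinarith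
  have hXAn : (1:ℝ) ≤ X * A * n := by nlinarith
  set L1 : ℝ := Real.log (2 * X * A * n) with hL1def
  set L2 : ℝ := Real.log (4 * X * A * n) with hL2def
  have hL1 : 0 ≤ L1 := Real.log_nonneg (by nlinarith [hXAn])
  have hL2 : 0 ≤ L2 := Real.log_nonneg (by nlinarith [hXAn])
  have hL12 : L1 ≤ L2 := Real.log_le_log (by nlinarith [hXAn]) (by nlinarith [hXAn])
  set c1 : ℝ := Real.sqrt (2 * L1) with hc1def
  set c2 : ℝ := Real.sqrt (4 * X * L2) with hc2def
  have hc1 : 0 ≤ c1 := Real.sqrt_nonneg _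
  have hc2 : 0 ≤ c2 := Real.sqrt_nonneg _
  set cnt : ℕ → 𝒳 × 𝒜 → ℕ :=
    fun t p => ∑ i ∈ Icc 1 h, if x t i = p.1 ∧ a t i = p.2 then 1 else 0 with hcntdef
  set K : 𝒳 × 𝒜 → ℕ := fun p => N (n + 1) p.1 p.2 with hKdef
  -- basic counting facts
  have hNf0 : ∀ p : 𝒳 × 𝒜, N 1 p.1 p.2 = 0 := by
    intro p; rw [hN]; simp
  have hNstep : ∀ (p : 𝒳 × 𝒜) t, 1 ≤ t → N (t + 1) p.1 p.2 = N t p.1 p.2 + cnt t p := by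
    intro p t ht
    rw [hN, hN, Finset.sum_Ico_succ_top ht, hcntdef]
  have hcnt_le : ∀ t p, cnt t p ≤ h := by
    intro t p
    calc cnt t p ≤ ∑ _i ∈ Icc 1 h, 1 :=
          Finset.sum_le_sum (fun i _ => by split <;> omega)
      _ = h := by simp
  have hone : ∀ (u : 𝒳) (v : 𝒜),
      (∑ p : 𝒳 × 𝒜, if u = p.1 ∧ v = p.2 then (1:ℕ) else 0) = 1 := by
    intro u v
    rw [Finset.sum_eq_single (u, v)]
    · simp
    · rintro p _ hp
      rw [if_neg]
      rintro ⟨h1, h2⟩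
      exact hp (Prod.ext_iff.mpr ⟨h1.symm, h2.symm⟩)
    · intro hmem; exact absurd (Finset.mem_univ _) hmem
  have hKsum : ∑ p : 𝒳 × 𝒜, K p = n * h := by
    have e : ∀ p : 𝒳 × 𝒜, K p = ∑ l ∈ Finset.Ico 1 (n + 1), cnt l p := by
      intro p; rw [hKdef]; exact hN _ _ _
    calc ∑ p : 𝒳 × 𝒜, K p
        = ∑ p : 𝒳 × 𝒜, ∑ l ∈ Finset.Ico 1 (n + 1), ∑ i ∈ Icc 1 h,
            (if x l i = p.1 ∧ a l i = p.2 then 1 else 0) := by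
          exact Finset.sum_congr rfl fun p _ => e p
      _ = ∑ l ∈ Finset.Ico 1 (n + 1), ∑ p : 𝒳 × 𝒜, ∑ i ∈ Icc 1 h,
            (if x l i = p.1 ∧ a l i = p.2 then 1 else 0) := Finset.sum_comm
      _ = ∑ l ∈ Finset.Ico 1 (n + 1), ∑ i ∈ Icc 1 h, ∑ p : 𝒳 × 𝒜,
            (if x l i = p.1 ∧ a l i = p.2 then 1 else 0) :=
          Finset.sum_congr rfl fun l _ => Finset.sum_comm
      _ = ∑ _l ∈ Finset.Ico 1 (n + 1), ∑ _i ∈ Icc 1 h, 1 := by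
          exact Finset.sum_congr rfl fun l _ => Finset.sum_congr rfl fun i _ => hone _ _
      _ = n * h := by simp [Nat.card_Ico]
  -- rewrite the double sum over (t,i) as a sum over pairs
  have hrw1 : ∀ t i, min 1 (β t (x t i) (a t i))
      = ∑ p : 𝒳 × 𝒜, if x t i = p.1 ∧ a t i = p.2 then min 1 (β t p.1 p.2) else 0 := by
    intro t i
    rw [Finset.sum_eq_single ((x t i, a t i))]
    · simp
    · rintro p _ hp
      rw [if_neg]
      rintro ⟨h1, h2⟩
      exact hp (Prod.ext_iff.mpr ⟨h1.symm, h2.symm⟩)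
    · intro hmem; exact absurd (Finset.mem_univ _) hmem
  have hcast : ∀ t (p : 𝒳 × 𝒜), ((cnt t p : ℕ) : ℝ)
      = ∑ i ∈ Icc 1 h, if x t i = p.1 ∧ a t i = p.2 then (1:ℝ) else 0 := by
    intro t p
    rw [hcntdef]
    push_cast
    rfl
  have hS : ∑ t ∈ Finset.Icc 1 n, ∑ i ∈ Finset.Icc 1 h, min 1 (β t (x t i) (a t i))
      = ∑ p : 𝒳 × 𝒜, ∑ t ∈ Icc 1 n, (cnt t p : ℝ) * min 1 (β t p.1 p.2) := by
    calc ∑ t ∈ Finset.Icc 1 n, ∑ i ∈ Finset.Icc 1 h, min 1 (β t (x t i) (a t i))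
        = ∑ t ∈ Icc 1 n, ∑ i ∈ Icc 1 h, ∑ p : 𝒳 × 𝒜,
            (if x t i = p.1 ∧ a t i = p.2 then min 1 (β t p.1 p.2) else 0) :=
          Finset.sum_congr rfl fun t _ => Finset.sum_congr rfl fun i _ => hrw1 t i
      _ = ∑ t ∈ Icc 1 n, ∑ p : 𝒳 × 𝒜, ∑ i ∈ Icc 1 h,
            (if x t i = p.1 ∧ a t i = p.2 then min 1 (β t p.1 p.2) else 0) :=
          Finset.sum_congr rfl fun t _ => Finset.sum_comm
      _ = ∑ p : 𝒳 × 𝒜, ∑ t ∈ Icc 1 n, ∑ i ∈ Icc 1 h,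
            (if x t i = p.1 ∧ a t i = p.2 then min 1 (β t p.1 p.2) else 0) := Finset.sum_comm
      _ = ∑ p : 𝒳 × 𝒜, ∑ t ∈ Icc 1 n, (cnt t p : ℝ) * min 1 (β t p.1 p.2) := by
          refine Finset.sum_congr rfl fun p _ => Finset.sum_congr rfl fun t _ => ?_
          rw [hcast, Finset.sum_mul]
          refine Finset.sum_congr rfl fun i _ => ?_
          split <;> simp
  -- pointwise bound on min 1 β
  have hβbound : ∀ t (p : 𝒳 × 𝒜), min 1 (β t p.1 p.2)
      ≤ min 1 (c1 / Real.sqrt (Λ + N t p.1 p.2 + 1))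
        + min 1 (c2 / Real.sqrt (Λ + N t p.1 p.2 + 1)) := by
    intro t p
    rw [hβ]
    have hD : (0:ℝ) ≤ (N t p.1 p.2 : ℝ) := Nat.cast_nonneg _
    have hden : (0:ℝ) < Real.sqrt (Λ + N t p.1 p.2 + 1) := Real.sqrt_pos.mpr (by linarith)
    have hs1 : Real.sqrt (2 * L1 / (ΛR p.1 p.2 + N t p.1 p.2 + 1))
        ≤ c1 / Real.sqrt (Λ + N t p.1 p.2 + 1) := by
      rw [Real.sqrt_div (by linarith : (0:ℝ) ≤ 2 * L1), hc1def]
      exact div_le_div_of_nonneg_left (Real.sqrt_nonneg _) hden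
        (Real.sqrt_le_sqrt (by linarith [hΛR p.1 p.2]))
    have hs2 : Real.sqrt (4 * X * L2 / (ΛT p.1 p.2 + N t p.1 p.2 + 1))
        ≤ c2 / Real.sqrt (Λ + N t p.1 p.2 + 1) := by
      rw [Real.sqrt_div (by nlinarith : (0:ℝ) ≤ 4 * X * L2), hc2def]
      exact div_le_div_of_nonneg_left (Real.sqrt_nonneg _) hden
        (Real.sqrt_le_sqrt (by linarith [hΛT p.1 p.2]))
    calc min 1 (Real.sqrt (2 * L1 / (ΛR p.1 p.2 + N t p.1 p.2 + 1))
            + Real.sqrt (4 * X * L2 / (ΛT p.1 p.2 + N t p.1 p.2 + 1)))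
        ≤ min 1 (c1 / Real.sqrt (Λ + N t p.1 p.2 + 1)
            + c2 / Real.sqrt (Λ + N t p.1 p.2 + 1)) :=
          min_le_min le_rfl (add_le_add hs1 hs2)
      _ ≤ _ := aux_min_add _ _ (by positivity) (by positivity)
  -- per-pair bound
  have perpair : ∀ (p : 𝒳 × 𝒜) (c : ℝ), 0 ≤ c →
      ∑ t ∈ Icc 1 n, (cnt t p : ℝ) * min 1 (c / Real.sqrt (Λ + N t p.1 p.2 + 1))
        ≤ h + c * Real.sqrt ((K p) * (Real.log (Λ + K p) - Real.log Λ)) := by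
    intro p c hc
    exact aux_perpair Λ c hΛ hc n h (fun t => N t p.1 p.2) (fun t => cnt t p)
      (hNf0 p) (fun t ht => hNstep p t ht) (fun t => hcnt_le t p)
  set L' : ℝ := Real.log (1 + n * h / (2 * X * A * Λ)) with hL'def
  have hL'nn : 0 ≤ L' := Real.log_nonneg (by
    have : (0:ℝ) ≤ n * h / (2 * X * A * Λ) := by positivity
    linarith)
  have hLp : ∀ p : 𝒳 × 𝒜, 0 ≤ Real.log (Λ + K p) - Real.log Λ := by
    intro p
    have : Λ ≤ Λ + K p := le_add_of_nonneg_right (Nat.cast_nonneg _)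
    linarith [Real.log_le_log hΛ this]
  set Q : ℝ := ∑ p : 𝒳 × 𝒜, Real.sqrt ((K p : ℝ) * (Real.log (Λ + K p) - Real.log Λ))
    with hQdef
  have hQnn : 0 ≤ Q := Finset.sum_nonneg fun p _ => Real.sqrt_nonneg _
  have hcard : ((Fintype.card (𝒳 × 𝒜) : ℕ) : ℝ) = X * A := by
    rw [Fintype.card_prod]; push_cast; rfl
  have hXApos : (0:ℝ) < X * A := mul_pos (by linarith) (by linarith)
  -- Jensen step
  have hJen : ∑ p : 𝒳 × 𝒜, Real.log (Λ + K p)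
      ≤ (X * A) * Real.log (Λ + n * h / (X * A)) := by
    have hKcast : ∑ p : 𝒳 × 𝒜, ((K p : ℕ) : ℝ) = (n : ℝ) * h := by
      rw [← Nat.cast_sum, hKsum]; push_cast; ring
    have hw : ∀ p ∈ (Finset.univ : Finset (𝒳 × 𝒜)), (0:ℝ) ≤ 1 / (X * A) :=
      fun p _ => by positivity
    have hw1 : ∑ _p ∈ (Finset.univ : Finset (𝒳 × 𝒜)), 1 / (X * A) = 1 := by
      rw [Finset.sum_const, nsmul_eq_mul, Finset.card_univ, hcard]
      field_simp
    have hmem : ∀ p ∈ (Finset.univ : Finset (𝒳 × 𝒜)), Λ + (K p : ℝ) ∈ Set.Ioi (0:ℝ) :=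
      fun p _ => by
        have : (0:ℝ) ≤ (K p : ℝ) := Nat.cast_nonneg _
        exact Set.mem_Ioi.mpr (by linarith)
    have hj := (strictConcaveOn_log_Ioi.concaveOn).le_map_sum
      (w := fun _ : 𝒳 × 𝒜 => 1 / (X * A)) (p := fun p => Λ + (K p : ℝ)) hw hw1 hmem
    simp only [smul_eq_mul] at hj
    have hsum : ∑ p : 𝒳 × 𝒜, 1 / (X * A) * (Λ + (K p : ℝ)) = Λ + n * h / (X * A) := by
      rw [← Finset.mul_sum, Finset.sum_add_distrib, Finset.sum_const, nsmul_eq_mul,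
        Finset.card_univ, hcard, hKcast]
      field_simp
    rw [hsum] at hj
    rw [← Finset.mul_sum] at hj
    calc ∑ p : 𝒳 × 𝒜, Real.log (Λ + K p)
        = (X * A) * (1 / (X * A) * ∑ p : 𝒳 × 𝒜, Real.log (Λ + K p)) := by
          field_simp
      _ ≤ (X * A) * Real.log (Λ + n * h / (X * A)) := by
          exact mul_le_mul_of_nonneg_left hj (le_of_lt hXApos)
  have hlogstep : Real.log (Λ + n * h / (X * A)) - Real.log Λ ≤ 2 * L' := by
    have hu : (0:ℝ) ≤ n * h / (X * A * Λ) := by positivity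
    have he1 : Real.log (Λ + n * h / (X * A)) - Real.log Λ
        = Real.log (1 + n * h / (X * A * Λ)) := by
      rw [← Real.log_div (by positivity) (ne_of_gt hΛ)]
      congr 1
      field_simp
    have he2 : (1:ℝ) + n * h / (2 * X * A * Λ) = 1 + (n * h / (X * A * Λ)) / 2 := by
      rw [div_div]
      congr 2
      ring
    have he3' : ∀ u : ℝ, 0 ≤ u → (1:ℝ) + u ≤ (1 + u / 2) ^ 2 := fun u hu => by nlinarith
    have he3 : (1:ℝ) + n * h / (X * A * Λ)
        ≤ (1 + (n * h / (X * A * Λ)) / 2) ^ 2 := he3' _ hu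
    rw [he1, hL'def, he2]
    calc Real.log (1 + n * h / (X * A * Λ))
        ≤ Real.log ((1 + (n * h / (X * A * Λ)) / 2) ^ 2) :=
          Real.log_le_log (by linarith) he3
      _ = 2 * Real.log (1 + (n * h / (X * A * Λ)) / 2) := by
          rw [Real.log_pow]; push_cast; ring
  have hLsum : ∑ p : 𝒳 × 𝒜, (Real.log (Λ + K p) - Real.log Λ) ≤ (X * A) * (2 * L') := by
    rw [Finset.sum_sub_distrib, Finset.sum_const, nsmul_eq_mul, Finset.card_univ, hcard]
    nlinarith [hJen, hlogstep, hXApos]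
  have hQle : Q ≤ Real.sqrt ((n : ℝ) * h) * Real.sqrt ((X * A) * (2 * L')) := by
    have hKcast : ∑ p : 𝒳 × 𝒜, ((K p : ℕ) : ℝ) = (n : ℝ) * h := by
      rw [← Nat.cast_sum, hKsum]; push_cast; ring
    calc Q = ∑ p : 𝒳 × 𝒜, Real.sqrt (K p) * Real.sqrt (Real.log (Λ + K p) - Real.log Λ) := by
          rw [hQdef]
          exact Finset.sum_congr rfl fun p _ => Real.sqrt_mul (Nat.cast_nonneg _) _
      _ ≤ Real.sqrt (∑ p : 𝒳 × 𝒜, ((K p : ℕ) : ℝ))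
            * Real.sqrt (∑ p : 𝒳 × 𝒜, (Real.log (Λ + K p) - Real.log Λ)) :=
          Real.sum_sqrt_mul_sqrt_le _ (fun p => Nat.cast_nonneg _) (fun p => hLp p)
      _ ≤ Real.sqrt ((n : ℝ) * h) * Real.sqrt ((X * A) * (2 * L')) := by
          rw [hKcast]
          exact mul_le_mul_of_nonneg_left (Real.sqrt_le_sqrt hLsum) (Real.sqrt_nonneg _)
  -- combine everything
  have hmain : ∑ p : 𝒳 × 𝒜, ∑ t ∈ Icc 1 n, (cnt t p : ℝ) * min 1 (β t p.1 p.2)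
      ≤ (X * A) * (2 * h) + (c1 + c2) * Q := by
    have hper : ∀ p ∈ (Finset.univ : Finset (𝒳 × 𝒜)),
        ∑ t ∈ Icc 1 n, (cnt t p : ℝ) * min 1 (β t p.1 p.2)
          ≤ 2 * h + (c1 + c2) * Real.sqrt ((K p : ℝ) * (Real.log (Λ + K p) - Real.log Λ)) := by
      intro p _
      calc ∑ t ∈ Icc 1 n, (cnt t p : ℝ) * min 1 (β t p.1 p.2)
          ≤ ∑ t ∈ Icc 1 n, ((cnt t p : ℝ) * min 1 (c1 / Real.sqrt (Λ + N t p.1 p.2 + 1))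
              + (cnt t p : ℝ) * min 1 (c2 / Real.sqrt (Λ + N t p.1 p.2 + 1))) := by
            refine Finset.sum_le_sum fun t _ => ?_
            rw [← mul_add]
            exact mul_le_mul_of_nonneg_left (hβbound t p) (Nat.cast_nonneg _)
        _ = (∑ t ∈ Icc 1 n, (cnt t p : ℝ) * min 1 (c1 / Real.sqrt (Λ + N t p.1 p.2 + 1)))
              + ∑ t ∈ Icc 1 n, (cnt t p : ℝ) * min 1 (c2 / Real.sqrt (Λ + N t p.1 p.2 + 1)) :=
            Finset.sum_add_distrib
        _ ≤ (h + c1 * Real.sqrt ((K p : ℝ) * (Real.log (Λ + K p) - Real.log Λ)))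
              + (h + c2 * Real.sqrt ((K p : ℝ) * (Real.log (Λ + K p) - Real.log Λ))) :=
            add_le_add (perpair p c1 hc1) (perpair p c2 hc2)
        _ = 2 * h + (c1 + c2) * Real.sqrt ((K p : ℝ) * (Real.log (Λ + K p) - Real.log Λ)) := by
            ring
    calc ∑ p : 𝒳 × 𝒜, ∑ t ∈ Icc 1 n, (cnt t p : ℝ) * min 1 (β t p.1 p.2)
        ≤ ∑ p : 𝒳 × 𝒜, (2 * (h:ℝ)
            + (c1 + c2) * Real.sqrt ((K p : ℝ) * (Real.log (Λ + K p) - Real.log Λ))) :=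
          Finset.sum_le_sum hper
      _ = (X * A) * (2 * h) + (c1 + c2) * Q := by
          rw [Finset.sum_add_distrib, Finset.sum_const, nsmul_eq_mul, Finset.card_univ, hcard,
            ← Finset.mul_sum, hQdef]
  have hc12 : c1 + c2 ≤ 4 * Real.sqrt (X * L2) := by
    have h1 : c1 ≤ Real.sqrt 2 * Real.sqrt (X * L2) := by
      rw [hc1def, ← Real.sqrt_mul (by norm_num : (0:ℝ) ≤ 2)]
      apply Real.sqrt_le_sqrt
      nlinarith
    have h2 : c2 = 2 * Real.sqrt (X * L2) := by
      rw [hc2def, show (4:ℝ) * X * L2 = 2 ^ 2 * (X * L2) by ring,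
        Real.sqrt_mul (by norm_num : (0:ℝ) ≤ (2:ℝ)^2), Real.sqrt_sq (by norm_num : (0:ℝ) ≤ 2)]
    have h3 : Real.sqrt 2 ≤ 2 := by
      nlinarith [Real.sq_sqrt (show (0:ℝ) ≤ 2 by norm_num), Real.sqrt_nonneg 2]
    have h4 : 0 ≤ Real.sqrt (X * L2) := Real.sqrt_nonneg _
    nlinarith
  have hfinal2 : (c1 + c2) * Q ≤ 4 * X * Real.sqrt (2 * A * n * h * L2 * L') := by
    calc (c1 + c2) * Q
        ≤ (4 * Real.sqrt (X * L2)) * (Real.sqrt ((n : ℝ) * h) * Real.sqrt ((X * A) * (2 * L'))) :=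
          mul_le_mul hc12 hQle hQnn (by positivity)
      _ = 4 * (Real.sqrt (X * L2) * Real.sqrt ((n : ℝ) * h) * Real.sqrt ((X * A) * (2 * L'))) := by
          ring
      _ = 4 * X * Real.sqrt (2 * A * n * h * L2 * L') := by
          rw [← Real.sqrt_mul (by positivity : (0:ℝ) ≤ X * L2),
            ← Real.sqrt_mul (by positivity : (0:ℝ) ≤ X * L2 * ((n:ℝ) * h)),
            show X * L2 * ((n:ℝ) * h) * ((X * A) * (2 * L')) = X ^ 2 * (2 * A * n * h * L2 * L')
              by ring,
            Real.sqrt_mul (sq_nonneg X), Real.sqrt_sq (by linarith)]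
          ring
  rw [hS]
  calc (h : ℝ) * ∑ p : 𝒳 × 𝒜, ∑ t ∈ Icc 1 n, (cnt t p : ℝ) * min 1 (β t p.1 p.2)
      ≤ (h : ℝ) * ((X * A) * (2 * h) + 4 * X * Real.sqrt (2 * A * n * h * L2 * L')) := by
        apply mul_le_mul_of_nonneg_left _ (by positivity : (0:ℝ) ≤ (h:ℝ))
        calc ∑ p : 𝒳 × 𝒜, ∑ t ∈ Icc 1 n, (cnt t p : ℝ) * min 1 (β t p.1 p.2)
            ≤ (X * A) * (2 * h) + (c1 + c2) * Q := hmain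
          _ ≤ (X * A) * (2 * h) + 4 * X * Real.sqrt (2 * A * n * h * L2 * L') := by
              linarith
    _ = 4 * X * h * Real.sqrt (2 * A * n * h * L2 * L') + 2 * X * A * h ^ 2 := by
        ring
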